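/- As α tends to 1, the Tsallis extropy JS_α(p) converges to the extropy J(p) = -Σ_{i=1}^N (1 - p_i) log(1 - p_i). -/

import Mathlib

theorem tsallis_extropy_tendsto_extropy (N : ℕ) (hN : 0 < N) (p : Fin N → ℝ)
    (hp : ∀ i, 0 ≤ p i ∧ p i < 1) (hsum : ∑ i, p i = 1) :
    Filter.Tendsto (fun α : ℝ => ((N : ℝ) - 1 - ∑ i, (1 - p i) ^ α) / (α - 1))
      (nhdsWithin 1 {(1 : ℝ)}ᶜ)
      (nhds (-∑ i, (1 - p i) * Real.log (1 - p i))) := by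
  have hD : HasDerivAt (fun α : ℝ => -∑ i, (1 - p i) ^ α)
      (-∑ i, (1 - p i) * Real.log (1 - p i)) 1 := by
    apply HasDerivAt.neg
    have := fun i : Fin N => (Real.hasStrictDerivAt_const_rpow
      (a := 1 - p i) (by linarith [(hp i).2]) 1).hasDerivAt
    simpa [Real.rpow_one] using HasDerivAt.fun_sum (u := Finset.univ) (fun i _ => this i)
  have := hasDerivAt_iff_tendsto_slope.mp hD
  have h1 : (fun α : ℝ => -∑ i, (1 - p i) ^ α) 1 = -((N : ℝ) - 1) := by
    simp only [Real.rpow_one, Finset.sum_sub_distrib, hsum]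
    push_cast [Finset.sum_const, Finset.card_univ, Fintype.card_fin]
    ring
  refine this.congr' ?_
  filter_upwards [self_mem_nhdsWithin] with α hα
  simp only [slope_def_field, h1, div_eq_inv_mul]
  ring
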